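/- Let G be a finite group generated by elements a and b with G = ⟨a⟩⟨b⟩, ⟨a⟩ ∩ ⟨b⟩ = 1, |a| = m, |b| = n. Suppose θ: G → G is an automorphism with θ(a) = b and θ(b) = a. Then m = n and the two induced skew-morphisms coincide: the skew-morphism φ of ℤ_n induced by a (via a·b^x = b^{φ(x)}·a^{π(x)}) equals the skew-morphism φ* of ℤ_m induced by b (via b·a^y = a^{φ*(y)}·b^{π*(y)}). -/

import Mathlib

lemma unique_factor_fst {G : Type*} [Group G] (a b : G)
    (hint : Subgroup.zpowers a ⊓ Subgroup.zpowers b = ⊥)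
    {i j k l : ℤ} (h : a ^ i * b ^ j = a ^ k * b ^ l) : a ^ i = a ^ k := by
  have hmem : a ^ (i - k) ∈ Subgroup.zpowers a ⊓ Subgroup.zpowers b := by
    constructor
    · exact ⟨i - k, rfl⟩
    · refine ⟨l - j, ?_⟩
      have : a ^ (-k) * (a ^ i * b ^ j) * b ^ (-j) = a ^ (-k) * (a ^ k * b ^ l) * b ^ (-j) := by
        rw [h]
      simp only [← zpow_add, mul_assoc] at this ⊢
      group at this ⊢
      rw [this]
  rw [hint, Subgroup.mem_bot] at hmem
  rw [zpow_sub] at hmem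
  exact mul_inv_eq_one.mp hmem

/-- If an exact bicyclic group `G = ⟨a⟩⟨b⟩` admits an automorphism transposing `a`
and `b`, then `m = n` and the two induced skew-morphisms `φ` (induced by `a`) and
`φ*` (induced by `b`) coincide. -/
theorem transposing_automorphism_symmetric (G : Type*) [Group G] [Finite G]
    (a b : G) (m n : ℕ) (hm : orderOf a = m) (hn : orderOf b = n)
    (hmpos : 0 < m) (hnpos : 0 < n)
    (hfact : ∀ g : G, ∃ i j : ℤ, g = a ^ i * b ^ j)
    (hint : Subgroup.zpowers a ⊓ Subgroup.zpowers b = ⊥)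
    (θ : G ≃* G) (hθa : θ a = b) (hθb : θ b = a)
    (φ : ZMod n → ZMod n) (π : ZMod n → ZMod m)
    (hφ : ∀ x : ZMod n, a * b ^ x.val = b ^ (φ x).val * a ^ (π x).val)
    (φs : ZMod m → ZMod m) (πs : ZMod m → ZMod n)
    (hφs : ∀ y : ZMod m, b * a ^ y.val = a ^ (φs y).val * b ^ (πs y).val) :
    m = n ∧ ∀ x : ℕ, (φ (x : ZMod n)).val = (φs (x : ZMod m)).val := by
  have hmn : m = n := by
    rw [← hm, ← hn, ← hθa]
    exact (orderOf_injective θ.toMonoidHom θ.injective a).symm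
  subst hmn
  refine ⟨rfl, fun x => ?_⟩
  haveI : NeZero m := ⟨hmpos.ne'⟩
  set y : ZMod m := (x : ZMod m)
  -- apply θ to hφ y
  have h1 : b * a ^ y.val = a ^ (φ y).val * b ^ (π y).val := by
    have := congrArg θ (hφ y)
    simpa [map_mul, map_pow, hθa, hθb] using this
  have h2 := hφs y
  have key : (a : G) ^ ((φ y).val : ℤ) * b ^ ((π y).val : ℤ)
      = a ^ ((φs y).val : ℤ) * b ^ ((πs y).val : ℤ) := by
    push_cast [zpow_natCast]
    rw [← h1, ← h2]
  have ha : a ^ ((φ y).val : ℤ) = a ^ ((φs y).val : ℤ) :=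
    unique_factor_fst a b hint key
  have ha' : a ^ (φ y).val = a ^ (φs y).val := by
    rw [zpow_natCast, zpow_natCast] at ha
    exact ha
  have hlt1 : (φ y).val < orderOf a := hm ▸ (φ y).val_lt
  have hlt2 : (φs y).val < orderOf a := hm ▸ (φs y).val_lt
  exact pow_injOn_Iio_orderOf hlt1 hlt2 ha'
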